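/- Let ξ be a binomial random variable Bin(n, p) with E[ξ] = np an integer. Then P(ξ ≤ E[ξ]) ≥ 1/2. -/

import Mathlib

open Finset

/-- Key discrete inequality: for `M ≤ K`, `j = i+1 ≤ M`,
`C(M+K, M-j) * K^(2j-1) ≤ C(M+K, M+j-1) * M^(2j-1)` (cast to ℝ). -/
lemma lemD (M K : ℕ) (hMK : M ≤ K) : ∀ i : ℕ, i + 1 ≤ M →
    ((M+K).choose (M - (i+1)) : ℝ) * (K:ℝ) ^ (2*i+1) ≤
    ((M+K).choose (M + i) : ℝ) * (M:ℝ) ^ (2*i+1) := by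
  intro i
  induction i with
  | zero =>
    intro h1
    -- C(n, M-1) * K ≤ C(n, M) * M ; use C(n,M)*M = C(n,M-1)*(K+1)
    have hid : (M+K).choose M * M = (M+K).choose (M-1) * (K+1) := by
      have := Nat.choose_succ_right_eq (M+K) (M-1)
      have hM : M - 1 + 1 = M := Nat.succ_pred_eq_of_pos h1
      rw [hM] at this
      rw [this]
      congr 1
      omega
    have : ((M+K).choose M : ℝ) * M = ((M+K).choose (M-1) : ℝ) * (K+1) := by
      exact_mod_cast congrArg (Nat.cast (R := ℝ)) hid
    norm_num
    rw [this]
    have : (0:ℝ) ≤ ((M+K).choose (M-1) : ℝ) := by positivity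
    nlinarith
  | succ i ih =>
    intro h2
    have hi1 : i + 1 ≤ M := by omega
    have IH := ih hi1
    -- identities
    -- C(n, M+i+1) * (M+i+1) = C(n, M+i) * (K - i)
    have id1 : (M+K).choose (M+i+1) * (M+i+1) = (M+K).choose (M+i) * (K-i) := by
      have := Nat.choose_succ_right_eq (M+K) (M+i)
      rw [this]; congr 1; omega
    -- C(n, M-i-1) * (M-i-1) = C(n, M-i-2) * (K+i+2)
    have id2 : (M+K).choose (M-(i+1)) * (M-(i+1)) = (M+K).choose (M-(i+2)) * (K+i+2) := by
      have := Nat.choose_succ_right_eq (M+K) (M-(i+2))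
      have h : M - (i+2) + 1 = M - (i+1) := by omega
      rw [h] at this
      rw [this]; congr 1; omega
    -- cast to ℝ
    have id1R : ((M+K).choose (M+i+1) : ℝ) * (M+i+1) = ((M+K).choose (M+i) : ℝ) * ((K:ℝ)-i) := by
      have := congrArg (Nat.cast (R := ℝ)) id1
      push_cast [Nat.cast_sub (by omega : i ≤ K)] at this
      convert this using 2 <;> push_cast <;> ring
    have id2R : ((M+K).choose (M-(i+1)) : ℝ) * ((M:ℝ)-(i+1)) = ((M+K).choose (M-(i+2)) : ℝ) * ((K:ℝ)+i+2) := by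
      have := congrArg (Nat.cast (R := ℝ)) id2
      push_cast [Nat.cast_sub (by omega : i+1 ≤ M)] at this
      convert this using 2 <;> push_cast <;> ring
    -- goal: C(n, M-(i+2)) * K^(2i+3) ≤ C(n, M+i+1) * M^(2i+3)
    -- multiply-through formulation
    have hKpos : (0:ℝ) < (K:ℝ)+i+2 := by positivity
    have hMipos : (0:ℝ) < (M:ℝ)+i+1 := by positivity
    rw [show 2*(i+1)+1 = (2*i+1)+2 by ring, show M + (i+1) = M+i+1 by ring]
    -- suffices to prove after multiplying both sides by (K+i+2)*(M+i+1) > 0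
    rw [← mul_le_mul_iff_of_pos_right (mul_pos hKpos hMipos)]
    -- LHS * (K+i+2)*(M+i+1) = [C(n,M-(i+2))*(K+i+2)] * K^(2i+3) * (M+i+1)
    --   = C(n,M-(i+1))*(M-(i+1)) * K^(2i+3) * (M+i+1)
    -- RHS * ... = [C(n,M+i+1)*(M+i+1)] * M^(2i+3) * (K+i+2)
    --   = C(n,M+i)*(K-i) * M^(2i+3) * (K+i+2)
    have LHSeq : ((M+K).choose (M-(i+2)) : ℝ) * (K:ℝ)^(2*i+1+2) * (((K:ℝ)+i+2) * ((M:ℝ)+i+1))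
        = (((M+K).choose (M-(i+1)) : ℝ) * ((M:ℝ)-(i+1))) * ((K:ℝ)^(2*i+1+2) * ((M:ℝ)+i+1)) := by
      rw [id2R]; ring
    have RHSeq : ((M+K).choose (M+i+1) : ℝ) * (M:ℝ)^(2*i+1+2) * (((K:ℝ)+i+2) * ((M:ℝ)+i+1))
        = (((M+K).choose (M+i) : ℝ) * ((K:ℝ)-i)) * ((M:ℝ)^(2*i+1+2) * ((K:ℝ)+i+2)) := by
      rw [← id1R]; ring
    rw [LHSeq, RHSeq]
    -- now: C(n,M-(i+1)) * (M-(i+1)) * K^(2i+1) * K^2 * (M+i+1)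
    --   ≤ C(n,M+i) * M^(2i+1) * M^2 * (K-i)*(K+i+2)
    have hC1 : (0:ℝ) ≤ ((M+K).choose (M-(i+1)) : ℝ) := by positivity
    have hC2 : (0:ℝ) ≤ ((M+K).choose (M+i) : ℝ) := by positivity
    have hKR : (0:ℝ) ≤ (K:ℝ)^(2*i+1) := by positivity
    have hMR : (0:ℝ) ≤ (M:ℝ)^(2*i+1) := by positivity
    -- key algebraic inequality: K^2*((M-(i+1))*(M+i+1)) ≤ M^2*((K-i)*(K+i+2))
    have key : (K:ℝ)^2 * (((M:ℝ)-(i+1)) * ((M:ℝ)+i+1)) ≤ (M:ℝ)^2 * (((K:ℝ)-i) * ((K:ℝ)+i+2)) := by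
      have hMK' : (M:ℝ) ≤ (K:ℝ) := by exact_mod_cast hMK
      have hKM0 : (0:ℝ) ≤ ((K:ℝ)-M)*((K:ℝ)+M) := by
        apply mul_nonneg (by linarith)
        have : (0:ℝ) ≤ (M:ℝ) := Nat.cast_nonneg M
        have : (0:ℝ) ≤ (K:ℝ) := Nat.cast_nonneg K
        linarith
      have h2' : (0:ℝ) ≤ ((i:ℝ)+1)^2 * (((K:ℝ)-M)*((K:ℝ)+M)) := by positivity
      have h3' : (0:ℝ) ≤ (M:ℝ)^2 * (2*(K:ℝ)+1) := by positivity
      nlinarith [h2', h3']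
    -- chain
    have step1 : (((M+K).choose (M-(i+1)) : ℝ) * ((M:ℝ)-(i+1))) * ((K:ℝ)^(2*i+1+2) * ((M:ℝ)+i+1))
        ≤ (((M+K).choose (M+i) : ℝ) * (M:ℝ)^(2*i+1)) * ((K:ℝ)^2 * (((M:ℝ)-(i+1)) * ((M:ℝ)+i+1))) := by
      have hMi : (0:ℝ) ≤ (M:ℝ)-(i+1) := by
        have : (i:ℝ)+1+1 ≤ M := by exact_mod_cast h2
        linarith
      calc (((M+K).choose (M-(i+1)) : ℝ) * ((M:ℝ)-(i+1))) * ((K:ℝ)^(2*i+1+2) * ((M:ℝ)+i+1))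
          = (((M+K).choose (M-(i+1)) : ℝ) * (K:ℝ)^(2*i+1)) * ((K:ℝ)^2 * (((M:ℝ)-(i+1)) * ((M:ℝ)+i+1))) := by ring
        _ ≤ (((M+K).choose (M+i) : ℝ) * (M:ℝ)^(2*i+1)) * ((K:ℝ)^2 * (((M:ℝ)-(i+1)) * ((M:ℝ)+i+1))) := by
            apply mul_le_mul_of_nonneg_right IH
            positivity
    have step2 : (((M+K).choose (M+i) : ℝ) * (M:ℝ)^(2*i+1)) * ((K:ℝ)^2 * (((M:ℝ)-(i+1)) * ((M:ℝ)+i+1)))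
        ≤ (((M+K).choose (M+i) : ℝ) * ((K:ℝ)-i)) * ((M:ℝ)^(2*i+1+2) * ((K:ℝ)+i+2)) := by
      calc (((M+K).choose (M+i) : ℝ) * (M:ℝ)^(2*i+1)) * ((K:ℝ)^2 * (((M:ℝ)-(i+1)) * ((M:ℝ)+i+1)))
          ≤ (((M+K).choose (M+i) : ℝ) * (M:ℝ)^(2*i+1)) * ((M:ℝ)^2 * (((K:ℝ)-i) * ((K:ℝ)+i+2))) := by
            apply mul_le_mul_of_nonneg_left key
            positivity
        _ = (((M+K).choose (M+i) : ℝ) * ((K:ℝ)-i)) * ((M:ℝ)^(2*i+1+2) * ((K:ℝ)+i+2)) := by ring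
    linarith
lemma discrete_case (m B : ℕ) (p : ℝ) (hB1 : 1 ≤ B) (hBm : B ≤ m)
    (hp : p = (m:ℝ) / (m+B)) :
    (1:ℝ)/2 ≤ ∑ k ∈ Finset.range (m + 1),
      (((m+B).choose k : ℝ)) * p ^ k * (1 - p) ^ (m + B - k) := by
  set n := m + B with hn
  have hm1 : 1 ≤ m := le_trans hB1 hBm
  have hcast : ((n:ℕ):ℝ) = (m:ℝ) + (B:ℝ) := by push_cast [hn]; ring
  have hmB0 : (0:ℝ) < (m:ℝ) + (B:ℝ) := by
    have : (0:ℝ) < (m:ℝ) := by exact_mod_cast hm1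
    have : (0:ℝ) ≤ (B:ℝ) := Nat.cast_nonneg B
    linarith
  have hq : 1 - p = (B:ℝ) / ((m:ℝ)+(B:ℝ)) := by
    rw [hp]; field_simp; ring
  have hp0 : 0 < p := by
    rw [hp]
    apply div_pos (by exact_mod_cast hm1) hmB0
  have hq0 : 0 < 1 - p := by
    rw [hq]
    apply div_pos (by exact_mod_cast hB1) hmB0
  set b : ℕ → ℝ := fun k => ((n.choose k : ℝ)) * p ^ k * (1 - p) ^ (n - k) with hb
  have hbnn : ∀ k, 0 ≤ b k := by
    intro k; dsimp [b]; positivity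
  -- total sum is 1
  have htot : ∑ k ∈ Finset.range (n + 1), b k = 1 := by
    have h := add_pow p (1-p) n
    rw [show p + (1-p) = 1 by ring, one_pow] at h
    rw [show ∑ k ∈ Finset.range (n + 1), b k
        = ∑ k ∈ Finset.range (n + 1), p ^ k * (1-p) ^ (n - k) * (n.choose k : ℝ) by
      apply Finset.sum_congr rfl; intro k _; dsimp [b]; ring]
    exact h.symm
  -- split
  have hmn : m + 1 ≤ n + 1 := by omega
  have hsplit : ∑ k ∈ Finset.range (m+1), b k + ∑ k ∈ Finset.Ico (m+1) (n+1), b k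
      = ∑ k ∈ Finset.range (n+1), b k := by
    rw [Finset.range_eq_Ico, Finset.range_eq_Ico]
    exact Finset.sum_Ico_consecutive _ (Nat.zero_le _) hmn
  -- termwise bound for the tail
  have hterm : ∀ i, i < B → b (m+1+i) ≤ b (m - i) := by
    intro i hiB
    have hj1 : i + 1 ≤ B := hiB
    dsimp [b]
    have ep : p^(m+1+i) = p^(m-i) * p^(2*i+1) := by rw [← pow_add]; congr 1; omega
    have eq1 : (1-p)^(n-(m-i)) = (1-p)^(B-(i+1)) * (1-p)^(2*i+1) := by
      rw [← pow_add]; congr 1; omega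
    have eq2 : n - (m+1+i) = B - (i+1) := by omega
    rw [ep, eq1, eq2]
    have key : ((n.choose (m+1+i) : ℝ)) * p ^ (2*i+1) ≤ ((n.choose (m-i) : ℝ)) * (1-p) ^ (2*i+1) := by
      have hsym1 : n.choose (m+1+i) = n.choose (B - (i+1)) := by
        rw [← Nat.choose_symm (by omega : m+1+i ≤ n)]
        congr 1
        all_goals omega
      have hsym2 : n.choose (m-i) = n.choose (B + i) := by
        rw [← Nat.choose_symm (by omega : m - i ≤ n)]
        congr 1
        all_goals omega
      have hD := lemD B m hBm i hj1
      rw [show B + m = n by omega] at hD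
      rw [hsym1, hsym2, hq, hp]
      rw [div_pow, div_pow]
      rw [← mul_div_assoc, ← mul_div_assoc, div_le_div_iff₀ (by positivity) (by positivity)]
      have hnn : (0:ℝ) ≤ ((m:ℝ)+(B:ℝ))^(2*i+1) := by positivity
      nlinarith [hD, hnn]
    calc (n.choose (m+1+i) : ℝ) * (p ^ (m-i) * p ^ (2*i+1)) * (1-p) ^ (B - (i+1))
        = ((n.choose (m+1+i) : ℝ) * p ^ (2*i+1)) * (p ^ (m-i) * (1-p) ^ (B-(i+1))) := by ring
      _ ≤ ((n.choose (m-i) : ℝ) * (1-p) ^ (2*i+1)) * (p ^ (m-i) * (1-p) ^ (B-(i+1))) := by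
          apply mul_le_mul_of_nonneg_right key; positivity
      _ = (n.choose (m-i) : ℝ) * p ^ (m-i) * ((1-p) ^ (B-(i+1)) * (1-p) ^ (2*i+1)) := by ring
  -- tail ≤ head
  have htail : ∑ k ∈ Finset.Ico (m+1) (n+1), b k ≤ ∑ k ∈ Finset.range (m+1), b k := by
    have h1 : ∑ k ∈ Finset.Ico (m+1) (n+1), b k = ∑ i ∈ Finset.range B, b (m+1+i) := by
      rw [Finset.sum_Ico_eq_sum_range]
      have hB : n + 1 - (m+1) = B := by omega
      rw [hB]
    have h2 : ∑ i ∈ Finset.range B, b (m+1+i) ≤ ∑ i ∈ Finset.range B, b (m-i) :=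
      Finset.sum_le_sum (fun i hi => hterm i (Finset.mem_range.mp hi))
    have h3 : ∑ i ∈ Finset.range B, b (m-i) ≤ ∑ i ∈ Finset.range (m+1), b (m-i) := by
      apply Finset.sum_le_sum_of_subset_of_nonneg
      · exact Finset.range_subset_range.mpr (by omega)
      · intro i _ _; exact hbnn _
    have h4 : ∑ i ∈ Finset.range (m+1), b (m-i) = ∑ k ∈ Finset.range (m+1), b k := by
      have := Finset.sum_range_reflect b (m+1)
      simpa using this
    linarith
  linarith
/-- ψ-monotonicity: `(m-y)^m (B+y)^B ≤ (m+y)^m (B-y)^B` for `0 ≤ y < m ≤ B`. -/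
lemma psi_ineq (m B : ℕ) (hm1 : 1 ≤ m) (hmB : m ≤ B) (y : ℝ) (hy0 : 0 ≤ y) (hym : y < m) :
    ((m:ℝ)-y)^m * ((B:ℝ)+y)^B ≤ ((m:ℝ)+y)^m * ((B:ℝ)-y)^B := by
  have hm0 : (0:ℝ) < m := by exact_mod_cast hm1
  have hB0 : (0:ℝ) < B := by
    have : (1:ℕ) ≤ B := le_trans hm1 hmB
    exact_mod_cast this
  have hmBR : (m:ℝ) ≤ (B:ℝ) := by exact_mod_cast hmB
  set ψ : ℝ → ℝ := fun t =>
    (m:ℝ) * Real.log ((m:ℝ)+t) - (m:ℝ) * Real.log ((m:ℝ)-t)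
    - (B:ℝ) * Real.log ((B:ℝ)+t) + (B:ℝ) * Real.log ((B:ℝ)-t) with hψ
  -- derivative at interior points
  have hder : ∀ t ∈ Set.Ioo (0:ℝ) y, HasDerivAt ψ
      ((m:ℝ)/((m:ℝ)+t) + (m:ℝ)/((m:ℝ)-t) - (B:ℝ)/((B:ℝ)+t) - (B:ℝ)/((B:ℝ)-t)) t := by
    intro t ht
    obtain ⟨ht0, hty⟩ := ht
    have h1 : (0:ℝ) < (m:ℝ)+t := by linarith
    have h2 : (0:ℝ) < (m:ℝ)-t := by linarith
    have h3 : (0:ℝ) < (B:ℝ)+t := by linarith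
    have h4 : (0:ℝ) < (B:ℝ)-t := by linarith
    have d1 : HasDerivAt (fun t : ℝ => Real.log ((m:ℝ)+t)) (1/((m:ℝ)+t)) t := by
      have := ((hasDerivAt_id t).const_add (m:ℝ)).log h1.ne'
      simpa using this
    have d2 : HasDerivAt (fun t : ℝ => Real.log ((m:ℝ)-t)) (-(1/((m:ℝ)-t))) t := by
      have := ((hasDerivAt_id t).const_sub (m:ℝ)).log h2.ne'
      simpa [neg_div] using this
    have d3 : HasDerivAt (fun t : ℝ => Real.log ((B:ℝ)+t)) (1/((B:ℝ)+t)) t := by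
      have := ((hasDerivAt_id t).const_add (B:ℝ)).log h3.ne'
      simpa using this
    have d4 : HasDerivAt (fun t : ℝ => Real.log ((B:ℝ)-t)) (-(1/((B:ℝ)-t))) t := by
      have := ((hasDerivAt_id t).const_sub (B:ℝ)).log h4.ne'
      simpa [neg_div] using this
    have := (((d1.const_mul (m:ℝ)).sub (d2.const_mul (m:ℝ))).sub
      (d3.const_mul (B:ℝ))).add (d4.const_mul (B:ℝ))
    convert this using 1
    rotate_left 3
    field_simp
    ring
    exacts [rfl, rfl, rfl]
  -- derivative is nonneg
  have hdernn : ∀ t ∈ Set.Ioo (0:ℝ) y,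
      0 ≤ (m:ℝ)/((m:ℝ)+t) + (m:ℝ)/((m:ℝ)-t) - (B:ℝ)/((B:ℝ)+t) - (B:ℝ)/((B:ℝ)-t) := by
    intro t ht
    obtain ⟨ht0, hty⟩ := ht
    have h1 : (0:ℝ) < (m:ℝ)+t := by linarith
    have h2 : (0:ℝ) < (m:ℝ)-t := by linarith
    have h3 : (0:ℝ) < (B:ℝ)+t := by linarith
    have h4 : (0:ℝ) < (B:ℝ)-t := by linarith
    rw [div_add_div _ _ h1.ne' h2.ne', div_sub_div _ _ (mul_pos h1 h2).ne' h3.ne',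
      div_sub_div _ _ (mul_pos (mul_pos h1 h2) h3).ne' h4.ne']
    apply div_nonneg _ (by positivity)
    nlinarith [mul_nonneg (mul_nonneg (sq_nonneg t) (sub_nonneg.mpr hmBR)) (by linarith : (0:ℝ) ≤ (B:ℝ)+(m:ℝ)), sq_nonneg t, mul_pos h1 h2, mul_pos h3 h4]
  -- continuity on Icc 0 y
  have hcont : ContinuousOn ψ (Set.Icc 0 y) := by
    have harg : ∀ t ∈ Set.Icc (0:ℝ) y, (m:ℝ)+t ≠ 0 := by
      intro t ht; have := ht.1; intro h; nlinarith
    have harg2 : ∀ t ∈ Set.Icc (0:ℝ) y, (m:ℝ)-t ≠ 0 := by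
      intro t ht; have := ht.2; intro h; nlinarith
    have harg3 : ∀ t ∈ Set.Icc (0:ℝ) y, (B:ℝ)+t ≠ 0 := by
      intro t ht; have := ht.1; intro h; nlinarith
    have harg4 : ∀ t ∈ Set.Icc (0:ℝ) y, (B:ℝ)-t ≠ 0 := by
      intro t ht; have := ht.2; intro h; nlinarith
    apply ContinuousOn.add
    apply ContinuousOn.sub
    apply ContinuousOn.sub
    · exact continuousOn_const.mul ((continuousOn_const.add continuousOn_id).log harg)
    · exact continuousOn_const.mul ((continuousOn_const.sub continuousOn_id).log harg2)
    · exact continuousOn_const.mul ((continuousOn_const.add continuousOn_id).log harg3)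
    · exact continuousOn_const.mul ((continuousOn_const.sub continuousOn_id).log harg4)
  -- monotone
  have hmono : MonotoneOn ψ (Set.Icc 0 y) := by
    apply monotoneOn_of_deriv_nonneg (convex_Icc 0 y) hcont
    · intro t ht
      rw [interior_Icc] at ht
      exact ((hder t ht).differentiableAt).differentiableWithinAt
    · intro t ht
      rw [interior_Icc] at ht
      rw [(hder t ht).deriv]
      exact hdernn t ht
  have hψ0 : ψ 0 = 0 := by simp [hψ]
  have hψy : 0 ≤ ψ y := by
    have := hmono (Set.left_mem_Icc.mpr hy0) (Set.right_mem_Icc.mpr hy0) hy0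
    rw [hψ0] at this; exact this
  -- exponentiate
  have key : (m:ℝ) * Real.log ((m:ℝ)-y) + (B:ℝ) * Real.log ((B:ℝ)+y)
      ≤ (m:ℝ) * Real.log ((m:ℝ)+y) + (B:ℝ) * Real.log ((B:ℝ)-y) := by
    simp only [hψ] at hψy; linarith
  have h1 : (0:ℝ) < (m:ℝ)+y := by linarith
  have h2 : (0:ℝ) < (m:ℝ)-y := by linarith
  have h3 : (0:ℝ) < (B:ℝ)+y := by linarith
  have h4 : (0:ℝ) < (B:ℝ)-y := by linarith
  have := Real.exp_le_exp.mpr key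
  rw [Real.exp_add, Real.exp_add] at this
  rw [show ((m:ℝ)) * Real.log ((m:ℝ)-y) = ((m:ℕ):ℝ) * Real.log ((m:ℝ)-y) by norm_num] at this
  simpa [Real.exp_nat_mul, Real.exp_log, h1, h2, h3, h4] using this

/-- Reflection inequality: for `0 ≤ y ≤ m ≤ B`, `1 ≤ m`:
`(m-y)^m (B+y)^(B-1) ≤ (m+y)^m (B-y)^(B-1)`. -/
lemma refl_ineq (m B : ℕ) (hm1 : 1 ≤ m) (hmB : m ≤ B) (y : ℝ) (hy0 : 0 ≤ y) (hym : y ≤ m) :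
    ((m:ℝ)-y)^m * ((B:ℝ)+y)^(B-1) ≤ ((m:ℝ)+y)^m * ((B:ℝ)-y)^(B-1) := by
  have hmBR : (m:ℝ) ≤ (B:ℝ) := by exact_mod_cast hmB
  rcases eq_or_lt_of_le hym with heq | hlt
  · -- y = m : LHS = 0
    have : (m:ℝ) - y = 0 := by rw [← heq]; ring
    rw [this, zero_pow (by omega : m ≠ 0), zero_mul]
    have h1 : (0:ℝ) ≤ (m:ℝ)+y := by positivity
    have h2 : (0:ℝ) ≤ (B:ℝ)-y := by rw [heq]; linarith
    positivity
  · have hpsi := psi_ineq m B hm1 hmB y hy0 hlt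
    have hB1 : 1 ≤ B := le_trans hm1 hmB
    have e1 : ((B:ℝ)+y)^B = ((B:ℝ)+y)^(B-1) * ((B:ℝ)+y) := by
      rw [← pow_succ]; congr 1; omega
    have e2 : ((B:ℝ)-y)^B = ((B:ℝ)-y)^(B-1) * ((B:ℝ)-y) := by
      rw [← pow_succ]; congr 1; omega
    rw [e1, e2] at hpsi
    have h3 : (0:ℝ) < (B:ℝ)+y := by positivity
    have h4 : (0:ℝ) ≤ (B:ℝ)-y := by linarith
    rw [← mul_le_mul_iff_of_pos_right h3]
    calc ((m:ℝ)-y)^m * ((B:ℝ)+y)^(B-1) * ((B:ℝ)+y)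
        = ((m:ℝ)-y)^m * (((B:ℝ)+y)^(B-1) * ((B:ℝ)+y)) := by ring
      _ ≤ ((m:ℝ)+y)^m * (((B:ℝ)-y)^(B-1) * ((B:ℝ)-y)) := hpsi
      _ ≤ ((m:ℝ)+y)^m * (((B:ℝ)-y)^(B-1) * ((B:ℝ)+y)) := by
          apply mul_le_mul_of_nonneg_left _ (by positivity)
          apply mul_le_mul_of_nonneg_left (by linarith) (by positivity)
      _ = ((m:ℝ)+y)^m * ((B:ℝ)-y)^(B-1) * ((B:ℝ)+y) := by ring
lemma hasDerivAt_F (n m : ℕ) (hmn : m < n) (x : ℝ) :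
    HasDerivAt (fun x : ℝ => ∑ k ∈ Finset.range (m+1), (n.choose k : ℝ) * x^k * (1-x)^(n-k))
      (-((n:ℝ) * (((n-1).choose m : ℝ)) * x^m * (1-x)^(n-1-m))) x := by
  classical
  set G : ℕ → ℝ := fun k => if k = 0 then 0 else
    (n:ℝ) * (((n-1).choose (k-1) : ℝ)) * x^(k-1) * (1-x)^(n-k) with hG
  have hterm : ∀ k ∈ Finset.range (m+1),
      HasDerivAt (fun x : ℝ => (n.choose k : ℝ) * x^k * (1-x)^(n-k)) (G k - G (k+1)) x := by
    intro k hk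
    have hkm : k ≤ m := Nat.lt_succ_iff.mp (Finset.mem_range.mp hk)
    have hkn : k < n := lt_of_le_of_lt hkm hmn
    have d1 : HasDerivAt (fun x : ℝ => x^k) ((k:ℝ) * x^(k-1)) x := hasDerivAt_pow k x
    have d2 : HasDerivAt (fun x : ℝ => (1-x)^(n-k))
        (((n-k : ℕ):ℝ) * (1-x)^(n-k-1) * (-1)) x := by
      exact (((hasDerivAt_id x).const_sub 1)).pow (n-k)
    have dmul := (d1.mul d2).const_mul ((n.choose k : ℝ))
    have hfun : (fun x : ℝ => (n.choose k : ℝ) * x^k * (1-x)^(n-k))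
        = fun y : ℝ => (n.choose k : ℝ) * (y ^ k * (1 - y) ^ (n - k)) := by
      funext y; ring
    rw [hfun]
    convert dmul using 1
    rotate_left 3
    -- value identity
    have hvalgoal : G k - G (k+1) = (n.choose k : ℝ) *
        (((k:ℝ) * x^(k-1)) * (1-x)^(n-k) + x^k * (((n-k:ℕ):ℝ) * (1-x)^(n-k-1) * (-1))) := by
      rcases Nat.eq_zero_or_pos k with hk0 | hkpos
      · subst hk0
        simp only [hG, if_pos rfl, if_neg one_ne_zero]
        norm_num
      · -- k ≥ 1
        have hk1 : k ≠ 0 := Nat.pos_iff_ne_zero.mp hkpos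
        have idA : n * ((n-1).choose (k-1)) = n.choose k * k := by
          have := Nat.add_one_mul_choose_eq (n-1) (k-1)
          have h1 : n - 1 + 1 = n := by omega
          have h2 : k - 1 + 1 = k := by omega
          rw [h1, h2] at this
          exact this
        have idB : n * ((n-1).choose k) = n.choose k * (n - k) := by
          have h3 := Nat.add_one_mul_choose_eq (n-1) k
          have h1 : n - 1 + 1 = n := by omega
          rw [h1] at h3
          -- h3 : n * (n-1).choose k = n.choose (k+1) * (k+1)
          rw [h3, Nat.choose_succ_right_eq]
        have idAR : (n:ℝ) * (((n-1).choose (k-1) : ℝ)) = (n.choose k : ℝ) * (k:ℝ) := by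
          exact_mod_cast congrArg (Nat.cast (R := ℝ)) idA
        have idBR : (n:ℝ) * (((n-1).choose k : ℝ)) = (n.choose k : ℝ) * ((n-k : ℕ):ℝ) := by
          exact_mod_cast congrArg (Nat.cast (R := ℝ)) idB
        simp only [hG, if_neg hk1, if_neg (Nat.succ_ne_zero k)]
        have e1 : (k+1) - 1 = k := by omega
        have e2 : n - (k+1) = n - k - 1 := by omega
        rw [e1, e2, idAR, idBR]
        ring
    rw [hvalgoal]
    exacts [rfl, rfl, rfl]
  have hsum := HasDerivAt.fun_sum hterm
  have htel : ∑ k ∈ Finset.range (m+1), (G k - G (k+1)) = G 0 - G (m+1) :=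
    Finset.sum_range_sub' G (m+1)
  rw [htel] at hsum
  have hG0 : G 0 = 0 := by simp [hG]
  have hGm : G (m+1) = (n:ℝ) * (((n-1).choose m : ℝ)) * x^m * (1-x)^(n-1-m) := by
    simp only [hG, if_neg (Nat.succ_ne_zero m)]
    have e1 : (m+1) - 1 = m := by omega
    have e2 : n - (m+1) = n - 1 - m := by omega
    rw [e1, e2]
  rw [hG0, hGm, zero_sub] at hsum
  exact hsum
lemma analytic_case (m B : ℕ) (p : ℝ) (hm1 : 1 ≤ m) (hmB : m ≤ B)
    (hp : p = (m:ℝ) / (m+B)) :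
    (1:ℝ)/2 ≤ ∑ k ∈ Finset.range (m + 1),
      (((m+B).choose k : ℝ)) * p ^ k * (1 - p) ^ (m + B - k) := by
  set n := m + B with hn
  have hmn : m < n := by omega
  have hB1 : 1 ≤ B := le_trans hm1 hmB
  have hnR : (0:ℝ) < (m:ℝ) + (B:ℝ) := by
    have h1 : (0:ℝ) < (m:ℝ) := by exact_mod_cast hm1
    have h2 : (0:ℝ) ≤ (B:ℝ) := Nat.cast_nonneg B
    linarith
  have hcast : ((n:ℕ):ℝ) = (m:ℝ) + (B:ℝ) := by push_cast [hn]; ring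
  set g : ℝ → ℝ := fun x => x^m * (1-x)^(B-1) with hg
  set c : ℝ := (n:ℝ) * (((n-1).choose m : ℝ)) with hc
  set F : ℝ → ℝ := fun x => ∑ k ∈ Finset.range (m+1), (n.choose k : ℝ) * x^k * (1-x)^(n-k) with hF
  have hderF : ∀ x : ℝ, HasDerivAt F (-(c * g x)) x := by
    intro x
    have := hasDerivAt_F n m hmn x
    have e : n - 1 - m = B - 1 := by omega
    rw [e] at this
    convert this using 1
    simp only [hc, hg]
    ring
  have hgcont : Continuous g := by
    simp only [hg]
    exact (continuous_pow m).mul ((continuous_const.sub continuous_id).pow (B-1))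
  have hintg : ∀ a b : ℝ, IntervalIntegrable g MeasureTheory.volume a b :=
    fun a b => hgcont.intervalIntegrable a b
  have hcg_cont : Continuous (fun x => -(c * g x)) := (continuous_const.mul hgcont).neg
  -- F 0 = 1
  have hF0 : F 0 = 1 := by
    simp only [hF]
    rw [Finset.sum_eq_single 0]
    · norm_num
    · intro k _ hk0
      rcases Nat.exists_eq_succ_of_ne_zero hk0 with ⟨j, rfl⟩
      simp [zero_pow]
    · intro h; exact absurd (Finset.mem_range.mpr (Nat.succ_pos m)) h
  -- F 1 = 0
  have hF1 : F 1 = 0 := by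
    simp only [hF]
    apply Finset.sum_eq_zero
    intro k hk
    have hkm : k ≤ m := Nat.lt_succ_iff.mp (Finset.mem_range.mp hk)
    have : n - k ≠ 0 := by omega
    simp [zero_pow this]
  -- FTC
  have ftc : ∀ b : ℝ, ∫ x in (0:ℝ)..b, -(c * g x) = F b - F 0 := by
    intro b
    exact intervalIntegral.integral_eq_sub_of_hasDerivAt
      (fun x _ => hderF x) (hcg_cont.intervalIntegrable 0 b)
  have hftc : ∀ b : ℝ, F b = 1 - c * ∫ x in (0:ℝ)..b, g x := by
    intro b
    have h := ftc b
    rw [hF0] at h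
    rw [intervalIntegral.integral_neg, intervalIntegral.integral_const_mul] at h
    linarith
  have htotal : c * ∫ x in (0:ℝ)..1, g x = 1 := by
    have h := hftc 1
    rw [hF1] at h
    linarith
  -- p facts
  have hp0 : 0 ≤ p := by rw [hp]; positivity
  have hmBR : (m:ℝ) ≤ (B:ℝ) := by exact_mod_cast hmB
  have hp2 : 2 * p ≤ 1 := by
    rw [hp, show (2:ℝ) * ((m:ℝ)/((m:ℝ)+(B:ℝ))) = (2*(m:ℝ))/((m:ℝ)+(B:ℝ)) by ring,
      div_le_one hnR]
    linarith
  have hp1 : p ≤ 1 := by linarith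
  -- pointwise reflection
  have hrefl : ∀ s ∈ Set.Icc (0:ℝ) p, g (p - s) ≤ g (p + s) := by
    intro s hs
    obtain ⟨hs0, hsp⟩ := hs
    set y : ℝ := ((m:ℝ)+(B:ℝ)) * s with hy
    have hy0 : 0 ≤ y := by positivity
    have hym : y ≤ (m:ℝ) := by
      rw [hy]
      calc ((m:ℝ)+(B:ℝ)) * s ≤ ((m:ℝ)+(B:ℝ)) * p := by
            apply mul_le_mul_of_nonneg_left hsp hnR.le
        _ = (m:ℝ) := by rw [hp]; field_simp
    have hR := refl_ineq m B hm1 hmB y hy0 hym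
    have ep1 : p - s = ((m:ℝ) - y) / ((m:ℝ)+(B:ℝ)) := by
      rw [hp, hy]; field_simp; try ring
    have ep2 : p + s = ((m:ℝ) + y) / ((m:ℝ)+(B:ℝ)) := by
      rw [hp, hy]; field_simp; try ring
    have ep3 : 1 - (p - s) = ((B:ℝ) + y) / ((m:ℝ)+(B:ℝ)) := by
      rw [hp, hy]; field_simp; try ring
    have ep4 : 1 - (p + s) = ((B:ℝ) - y) / ((m:ℝ)+(B:ℝ)) := by
      rw [hp, hy]; field_simp; try ring
    simp only [hg]
    rw [ep3, ep4, ep1, ep2, div_pow, div_pow, div_pow, div_pow,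
      div_mul_div_comm, div_mul_div_comm]
    rw [div_le_div_iff₀ (by positivity) (by positivity)]
    exact mul_le_mul_of_nonneg_right hR (by positivity)
  -- integral chain
  have hI1 : ∫ s in (0:ℝ)..p, g (p - s) = ∫ x in (0:ℝ)..p, g x := by
    have := intervalIntegral.integral_comp_sub_left g p (a := 0) (b := p)
    simpa using this
  have hI2 : ∫ s in (0:ℝ)..p, g (p + s) = ∫ x in p..(p+p), g x := by
    have := intervalIntegral.integral_comp_add_left g p (a := 0) (b := p)
    simpa using this
  have hmono1 : ∫ s in (0:ℝ)..p, g (p - s) ≤ ∫ s in (0:ℝ)..p, g (p + s) := by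
    apply intervalIntegral.integral_mono_on hp0
    · exact (hgcont.comp (continuous_const.sub continuous_id)).intervalIntegrable 0 p
    · exact (hgcont.comp (continuous_const.add continuous_id)).intervalIntegrable 0 p
    · exact hrefl
  have hgnn : ∀ t ∈ Set.Icc (p+p) (1:ℝ), 0 ≤ g t := by
    intro t ht
    obtain ⟨ht1, ht2⟩ := ht
    have h0t : (0:ℝ) ≤ t := by linarith [hp0]
    have h1t : (0:ℝ) ≤ 1 - t := by linarith
    simp only [hg]
    exact mul_nonneg (pow_nonneg h0t m) (pow_nonneg h1t (B-1))
  have hadj : (∫ x in p..(p+p), g x) + (∫ x in (p+p)..1, g x) = ∫ x in p..(1:ℝ), g x :=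
    intervalIntegral.integral_add_adjacent_intervals (hintg p (p+p)) (hintg (p+p) 1)
  have hmono2 : ∫ x in p..(p+p), g x ≤ ∫ x in p..(1:ℝ), g x := by
    have hnn : 0 ≤ ∫ x in (p+p)..1, g x := by
      apply intervalIntegral.integral_nonneg (by linarith) hgnn
    linarith
  have hadj2 : (∫ x in (0:ℝ)..p, g x) + (∫ x in p..(1:ℝ), g x) = ∫ x in (0:ℝ)..1, g x :=
    intervalIntegral.integral_add_adjacent_intervals (hintg 0 p) (hintg p 1)
  have hhalf : 2 * ∫ x in (0:ℝ)..p, g x ≤ ∫ x in (0:ℝ)..1, g x := by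
    have h1 : ∫ x in (0:ℝ)..p, g x ≤ ∫ x in p..(1:ℝ), g x := by
      rw [← hI1]
      calc ∫ s in (0:ℝ)..p, g (p - s) ≤ ∫ s in (0:ℝ)..p, g (p + s) := hmono1
        _ = ∫ x in p..(p+p), g x := hI2
        _ ≤ ∫ x in p..(1:ℝ), g x := hmono2
    rw [two_mul, ← hadj2]
    exact add_le_add (le_refl _) h1
  -- conclude
  have hc0 : 0 ≤ c := by simp only [hc]; positivity
  have hfinal : c * ∫ x in (0:ℝ)..p, g x ≤ 1/2 := by
    have := mul_le_mul_of_nonneg_left hhalf hc0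
    rw [show c * (2 * ∫ x in (0:ℝ)..p, g x) = 2 * (c * ∫ x in (0:ℝ)..p, g x) by ring] at this
    rw [htotal] at this
    linarith
  have := hftc p
  have hgoal : F p = ∑ k ∈ Finset.range (m + 1),
      (((m+B).choose k : ℝ)) * p ^ k * (1 - p) ^ (m + B - k) := by rfl
  rw [← hgoal]
  rw [this]
  linarith

/-- A binomial random variable `Bin(n,p)` whose mean `np` is an integer `m` satisfies
`P(ξ ≤ m) ≥ 1/2`. -/
theorem stmt10 (n m : ℕ) (p : ℝ) (hp0 : 0 ≤ p) (hp1 : p ≤ 1) (hm : (m : ℝ) = n * p) :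
    (1 : ℝ) / 2 ≤ ∑ k ∈ Finset.range (m + 1),
      (n.choose k : ℝ) * p ^ k * (1 - p) ^ (n - k) := by
  rcases Nat.eq_zero_or_pos n with hn0 | hn1
  · subst hn0
    have hm0 : m = 0 := by
      have : (m:ℝ) = 0 := by rw [hm]; norm_num
      exact_mod_cast this
    subst hm0
    norm_num
  · -- n ≥ 1
    have hnR : (0:ℝ) < (n:ℝ) := by exact_mod_cast hn1
    have hmn : m ≤ n := by
      have : (m:ℝ) ≤ (n:ℝ) := by
        rw [hm]
        calc (n:ℝ) * p ≤ (n:ℝ) * 1 := by apply mul_le_mul_of_nonneg_left hp1 hnR.le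
          _ = (n:ℝ) := by ring
      exact_mod_cast this
    rcases Nat.eq_zero_or_pos m with hm0 | hm1
    · -- m = 0 hence p = 0
      subst hm0
      have hp00 : p = 0 := by
        have : (n:ℝ) * p = 0 := by rw [← hm]; norm_num
        rcases mul_eq_zero.mp this with h | h
        · exact absurd h hnR.ne'
        · exact h
      subst hp00
      norm_num
    · rcases eq_or_lt_of_le hmn with hmeq | hmlt
      · -- m = n : p may be 1; the sum is the full binomial sum = 1
        subst hmeq
        have h := add_pow p (1-p) m
        rw [show p + (1-p) = 1 by ring, one_pow] at h
        rw [show ∑ k ∈ Finset.range (m + 1), (m.choose k : ℝ) * p ^ k * (1 - p) ^ (m - k)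
            = ∑ k ∈ Finset.range (m + 1), p ^ k * (1-p) ^ (m - k) * (m.choose k : ℝ) by
          apply Finset.sum_congr rfl; intro k _; ring]
        rw [← h]
        norm_num
      · -- 1 ≤ m < n
        set B := n - m with hB
        have hnmB : n = m + B := by omega
        have hB1 : 1 ≤ B := by omega
        have hcast : ((n:ℕ):ℝ) = (m:ℝ) + (B:ℝ) := by
          rw [hnmB]; push_cast; ring
        have hpeq : p = (m:ℝ) / ((m:ℝ) + (B:ℝ)) := by
          rw [← hcast, hm]
          field_simp
        rcases le_or_gt m B with hmB | hBm
        · -- p ≤ 1/2 : analytic case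
          have := analytic_case m B p hm1 hmB hpeq
          rw [← hnmB] at this
          exact this
        · -- p > 1/2 : discrete case
          have := discrete_case m B p hB1 hBm.le hpeq
          rw [← hnmB] at this
          exact this
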